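/- Let ρ : ℂⁿ → ℝ be twice continuously differentiable (over ℝ) near a point z₀, and set f(z) := ∑_{j=1}^n (∂ρ/∂z_j)(z)·(∂ρ/∂z̄_j)(z) (= ∑_j |∂ρ/∂z_j(z)|²). Suppose Z = (ζ_1,…,ζ_n) ∈ ℂⁿ satisfies ∑_{k=1}^n conj(ζ_k)·(∂f/∂z̄_k)(z₀) = 0 (as happens when Z lies in the complex tangent space at z₀ of a level set of ρ on which f is constant). Then ∑_{j=1}^n (∑_{k=1}^n conj(ζ_k)·(∂²ρ/∂z̄_k∂z̄_j)(z₀))·(∂ρ/∂z_j)(z₀) = −∑_{j,k=1}^n (∂²ρ/∂z_j∂z̄_k)(z₀)·(∂ρ/∂z̄_j)(z₀)·conj(ζ_k) = −(1/2)·L_ρ(z₀)(n(z₀), Z̄), where n(z₀) := 2·(∂ρ/∂z̄_1(z₀),…,∂ρ/∂z̄_n(z₀)) ∈ ℂⁿ. -/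

import Mathlib

/-!
STATEMENT 0: The normal (1,0)-component of the commutator identity (1) of the paper:
for ρ : ℂⁿ → ℝ twice continuously differentiable near z₀ and
f(z) := ∑ⱼ (∂ρ/∂zⱼ)(z)·(∂ρ/∂z̄ⱼ)(z), if Z = (ζ₁,…,ζₙ) satisfies
∑ₖ conj(ζₖ)·(∂f/∂z̄ₖ)(z₀) = 0, then
∑ⱼ (∑ₖ conj(ζₖ)·(∂²ρ/∂z̄ₖ∂z̄ⱼ)(z₀))·(∂ρ/∂zⱼ)(z₀)
  = −∑ⱼₖ (∂²ρ/∂zⱼ∂z̄ₖ)(z₀)·(∂ρ/∂z̄ⱼ)(z₀)·conj(ζₖ) = −(1/2)·L_ρ(z₀)(n(z₀), Z̄).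
-/

open Complex Finset

noncomputable section

/-- The `j`-th standard basis vector of `ℂⁿ`. -/
def sb (n : ℕ) (j : Fin n) : EuclideanSpace ℂ (Fin n) := EuclideanSpace.single j 1

/-- Wirtinger derivative `∂ρ/∂z_j` of a real-valued function (real Fréchet derivative). -/
def wdz {n : ℕ} (ρ : EuclideanSpace ℂ (Fin n) → ℝ) (z : EuclideanSpace ℂ (Fin n))
    (j : Fin n) : ℂ :=
  (1 / 2 : ℂ) * ((fderiv ℝ ρ z (sb n j) : ℂ) -
    Complex.I * (fderiv ℝ ρ z ((Complex.I : ℂ) • sb n j) : ℂ))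

/-- Wirtinger derivative `∂ρ/∂z̄_j` of a real-valued function. -/
def wdzbar {n : ℕ} (ρ : EuclideanSpace ℂ (Fin n) → ℝ) (z : EuclideanSpace ℂ (Fin n))
    (j : Fin n) : ℂ :=
  (1 / 2 : ℂ) * ((fderiv ℝ ρ z (sb n j) : ℂ) +
    Complex.I * (fderiv ℝ ρ z ((Complex.I : ℂ) • sb n j) : ℂ))

/-- Wirtinger derivative `∂f/∂z̄_k` of a complex-valued function. -/
def wdzbarC {n : ℕ} (f : EuclideanSpace ℂ (Fin n) → ℂ) (z : EuclideanSpace ℂ (Fin n))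
    (k : Fin n) : ℂ :=
  (1 / 2 : ℂ) * (fderiv ℝ f z (sb n k) +
    Complex.I * fderiv ℝ f z ((Complex.I : ℂ) • sb n k))

/-- Real second Fréchet derivative `D²ρ(z)(v,w)`. -/
def D2 {n : ℕ} (ρ : EuclideanSpace ℂ (Fin n) → ℝ)
    (z v w : EuclideanSpace ℂ (Fin n)) : ℝ :=
  fderiv ℝ (fun y => fderiv ℝ ρ y v) z w

/-- The mixed complex second derivative `∂²ρ/∂z_j∂z̄_k(z)`. -/
def dzdzbar {n : ℕ} (ρ : EuclideanSpace ℂ (Fin n) → ℝ) (z : EuclideanSpace ℂ (Fin n))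
    (j k : Fin n) : ℂ :=
  (1 / 4 : ℂ) * ((D2 ρ z (sb n j) (sb n k) : ℂ)
    + (D2 ρ z ((Complex.I : ℂ) • sb n j) ((Complex.I : ℂ) • sb n k) : ℂ)
    + Complex.I * ((D2 ρ z (sb n j) ((Complex.I : ℂ) • sb n k) : ℂ)
      - (D2 ρ z ((Complex.I : ℂ) • sb n j) (sb n k) : ℂ)))

/-- The antiholomorphic second derivative `∂²ρ/∂z̄_k∂z̄_j(z)`. -/
def dzbardzbar {n : ℕ} (ρ : EuclideanSpace ℂ (Fin n) → ℝ) (z : EuclideanSpace ℂ (Fin n))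
    (k j : Fin n) : ℂ :=
  (1 / 4 : ℂ) * ((D2 ρ z (sb n k) (sb n j) : ℂ)
    - (D2 ρ z ((Complex.I : ℂ) • sb n k) ((Complex.I : ℂ) • sb n j) : ℂ)
    + Complex.I * ((D2 ρ z (sb n k) ((Complex.I : ℂ) • sb n j) : ℂ)
      + (D2 ρ z ((Complex.I : ℂ) • sb n k) (sb n j) : ℂ)))

/-- The Levi form `L_ρ(z)(u, w̄) = ∑_{j,k} ∂²ρ/∂z_j∂z̄_k(z)·u_j·conj(w_k)`. -/
def Levi {n : ℕ} (ρ : EuclideanSpace ℂ (Fin n) → ℝ) (z : EuclideanSpace ℂ (Fin n))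
    (u w : Fin n → ℂ) : ℂ :=
  ∑ j, ∑ k, dzdzbar ρ z j k * u j * (starRingEnd ℂ) (w k)

theorem commutator_normal_component_eq_levi {n : ℕ}
    (ρ : EuclideanSpace ℂ (Fin n) → ℝ) (z₀ : EuclideanSpace ℂ (Fin n))
    (hρ : ContDiffAt ℝ 2 ρ z₀) (Z : Fin n → ℂ)
    (f : EuclideanSpace ℂ (Fin n) → ℂ)
    (hf : f = fun z => ∑ j, wdz ρ z j * wdzbar ρ z j)
    (hZ : ∑ k, (starRingEnd ℂ) (Z k) * wdzbarC f z₀ k = 0) :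
    (∑ j, (∑ k, (starRingEnd ℂ) (Z k) * dzbardzbar ρ z₀ k j) * wdz ρ z₀ j
        = -∑ j, ∑ k, dzdzbar ρ z₀ j k * wdzbar ρ z₀ j * (starRingEnd ℂ) (Z k)) ∧
    (-∑ j, ∑ k, dzdzbar ρ z₀ j k * wdzbar ρ z₀ j * (starRingEnd ℂ) (Z k)
        = -(1 / 2 : ℂ) * Levi ρ z₀ (fun j => 2 * wdzbar ρ z₀ j) Z) := by
  subst hf
  -- analytic setup
  have h2d : ContDiffAt ℝ 1 (fderiv ℝ ρ) z₀ := hρ.fderiv_right (by norm_num)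
  have hgd : DifferentiableAt ℝ (fderiv ℝ ρ) z₀ := h2d.differentiableAt one_ne_zero
  set B := fderiv ℝ (fderiv ℝ ρ) z₀ with hB
  have hsymm : ∀ v w : EuclideanSpace ℂ (Fin n), B v w = B w v :=
    fun v w => hρ.isSymmSndFDerivAt (by norm_num) v w
  have hA : ∀ v : EuclideanSpace ℂ (Fin n), HasFDerivAt (fun y => fderiv ℝ ρ y v)
      ((ContinuousLinearMap.apply ℝ ℝ v).comp B) z₀ :=
    fun v => ((ContinuousLinearMap.apply ℝ ℝ v).hasFDerivAt).comp z₀ hgd.hasFDerivAt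
  have hD2 : ∀ v w : EuclideanSpace ℂ (Fin n), D2 ρ z₀ v w = B w v := by
    intro v w
    rw [D2, (hA v).fderiv]
    rfl
  set M : EuclideanSpace ℂ (Fin n) → (EuclideanSpace ℂ (Fin n) →L[ℝ] ℂ) :=
    fun v => Complex.ofRealCLM.comp ((ContinuousLinearMap.apply ℝ ℝ v).comp B) with hM
  have hMapp : ∀ v w : EuclideanSpace ℂ (Fin n), M v w = ((B w v : ℝ) : ℂ) := fun v w => rfl
  have hAc : ∀ v : EuclideanSpace ℂ (Fin n), HasFDerivAt (fun y => ((fderiv ℝ ρ y v : ℝ) : ℂ))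
      (M v) z₀ := fun v => Complex.ofRealCLM.hasFDerivAt.comp z₀ (hA v)
  have hwdz : ∀ j, HasFDerivAt (fun z => wdz ρ z j)
      ((1/2 : ℂ) • (M (sb n j) - Complex.I • M ((Complex.I : ℂ) • sb n j))) z₀ := by
    intro j
    have h := ((hAc (sb n j)).sub (((hAc ((Complex.I : ℂ) • sb n j))).const_mul
      Complex.I)).const_mul ((1/2 : ℂ))
    simpa [wdz, smul_sub] using h
  have hwdzbar : ∀ j, HasFDerivAt (fun z => wdzbar ρ z j)
      ((1/2 : ℂ) • (M (sb n j) + Complex.I • M ((Complex.I : ℂ) • sb n j))) z₀ := by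
    intro j
    have h := ((hAc (sb n j)).add (((hAc ((Complex.I : ℂ) • sb n j))).const_mul
      Complex.I)).const_mul ((1/2 : ℂ))
    simpa [wdzbar, smul_add] using h
  have hfd : HasFDerivAt (fun z => ∑ j, wdz ρ z j * wdzbar ρ z j)
      (∑ j, (wdz ρ z₀ j • ((1/2 : ℂ) • (M (sb n j) + Complex.I • M ((Complex.I : ℂ) • sb n j)))
        + wdzbar ρ z₀ j • ((1/2 : ℂ) • (M (sb n j) - Complex.I • M ((Complex.I : ℂ) • sb n j)))))
      z₀ := HasFDerivAt.fun_sum fun j _ => (hwdz j).fun_mul (hwdzbar j)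
  -- the key pointwise identity
  have hkey : ∀ k, wdzbarC (fun z => ∑ j, wdz ρ z j * wdzbar ρ z j) z₀ k
      = ∑ j, (dzbardzbar ρ z₀ k j * wdz ρ z₀ j + dzdzbar ρ z₀ j k * wdzbar ρ z₀ j) := by
    intro k
    rw [wdzbarC, hfd.fderiv]
    simp only [ContinuousLinearMap.sum_apply, ContinuousLinearMap.add_apply,
      ContinuousLinearMap.smul_apply, ContinuousLinearMap.sub_apply, smul_eq_mul, hMapp]
    simp only [mul_add, Finset.mul_sum, ← Finset.sum_add_distrib]
    refine Finset.sum_congr rfl fun j _ => ?_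
    rw [dzbardzbar, dzdzbar]
    simp only [hD2]
    rw [hsymm (sb n j) (sb n k), hsymm ((Complex.I : ℂ) • sb n j) ((Complex.I : ℂ) • sb n k),
      hsymm ((Complex.I : ℂ) • sb n j) (sb n k), hsymm (sb n j) ((Complex.I : ℂ) • sb n k)]
    linear_combination ((1/4 : ℂ) * (wdz ρ z₀ j - wdzbar ρ z₀ j) *
      ((B ((Complex.I : ℂ) • sb n k) ((Complex.I : ℂ) • sb n j) : ℝ) : ℂ)) * Complex.I_mul_I
  -- rearrangement of the vanishing sum
  have hsum : ∑ k, (starRingEnd ℂ) (Z k) *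
        wdzbarC (fun z => ∑ j, wdz ρ z j * wdzbar ρ z j) z₀ k
      = (∑ j, (∑ k, (starRingEnd ℂ) (Z k) * dzbardzbar ρ z₀ k j) * wdz ρ z₀ j)
        + ∑ j, ∑ k, dzdzbar ρ z₀ j k * wdzbar ρ z₀ j * (starRingEnd ℂ) (Z k) := by
    calc ∑ k, (starRingEnd ℂ) (Z k) *
          wdzbarC (fun z => ∑ j, wdz ρ z j * wdzbar ρ z j) z₀ k
        = ∑ k, ∑ j, ((starRingEnd ℂ) (Z k) * dzbardzbar ρ z₀ k j * wdz ρ z₀ j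
            + dzdzbar ρ z₀ j k * wdzbar ρ z₀ j * (starRingEnd ℂ) (Z k)) := by
          refine Finset.sum_congr rfl fun k _ => ?_
          rw [hkey k, Finset.mul_sum]
          exact Finset.sum_congr rfl fun j _ => by ring
      _ = ∑ j, ∑ k, ((starRingEnd ℂ) (Z k) * dzbardzbar ρ z₀ k j * wdz ρ z₀ j
            + dzdzbar ρ z₀ j k * wdzbar ρ z₀ j * (starRingEnd ℂ) (Z k)) := Finset.sum_comm
      _ = _ := by
          rw [← Finset.sum_add_distrib]
          refine Finset.sum_congr rfl fun j _ => ?_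
          rw [Finset.sum_add_distrib, Finset.sum_mul]
  constructor
  · have h0 : (∑ j, (∑ k, (starRingEnd ℂ) (Z k) * dzbardzbar ρ z₀ k j) * wdz ρ z₀ j)
        + ∑ j, ∑ k, dzdzbar ρ z₀ j k * wdzbar ρ z₀ j * (starRingEnd ℂ) (Z k) = 0 :=
      hsum.symm.trans hZ
    linear_combination h0
  · rw [Levi, neg_mul, neg_inj, Finset.mul_sum]
    refine Finset.sum_congr rfl fun j _ => ?_
    rw [Finset.mul_sum]
    exact Finset.sum_congr rfl fun k _ => by ring

end
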